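/- Let m ≥ 1 be an integer and let ω be a real number with -1 ≤ ω ≤ 1. Define W(x) = m - 1 - m/(1-x) + (1 - ωx) / ((1-x)^{m+1} · (1 - 2ωx + x²)) for x ∈ (0,1), extended by its limit value at 0 (W(0) = 0). Then W is superadditive: for all nonnegative real numbers x, y with x + y < 1, one has W(x) + W(y) ≤ W(x+y). -/

import Mathlib

open Real Set
open Finset

lemma abel_step (b t : ℕ → ℝ) (N : ℕ) :
    ∑ j ∈ range N, (b j - b (j+1)) * (∑ k ∈ range (j+1), t k)
      = ∑ j ∈ range N, b j * t j - b N * ∑ k ∈ range N, t k := by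
  induction N with
  | zero => simp
  | succ N ih =>
      rw [sum_range_succ (fun j => (b j - b (j+1)) * (∑ k ∈ range (j+1), t k)) N, ih,
        sum_range_succ (fun j => b j * t j) N, sum_range_succ t N]
      ring

lemma abel2 (b t : ℕ → ℝ) (N : ℕ) (hN : b N = 0) (hN1 : b (N+1) = 0) :
    ∑ j ∈ range N, b j * t j
      = ∑ j ∈ range N, (b j - 2*b (j+1) + b (j+2))
          * (∑ i ∈ range (j+1), ∑ k ∈ range (i+1), t k) := by
  have h1 := abel_step b t N
  rw [hN, zero_mul, sub_zero] at h1
  have h2 := abel_step (fun j => b j - b (j+1)) (fun j => ∑ k ∈ range (j+1), t k) N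
  rw [hN, hN1, sub_zero, zero_mul, sub_zero] at h2
  rw [← h1, ← h2]
  exact Finset.sum_congr rfl (fun j _ => by ring)


lemma fejer_id (θ : ℝ) (N : ℕ) :
    2 * ∑ i ∈ range N, ∑ k ∈ range (i+1), Real.cos (k * θ)
      = N + Complex.normSq (∑ k ∈ range N, Complex.exp (k * θ * Complex.I)) := by
  induction N with
  | zero => simp
  | succ N ih =>
      have hre : ∀ k : ℕ,
          (Complex.exp (k * θ * Complex.I) * (starRingEnd ℂ) (Complex.exp (N * θ * Complex.I))).re
            = Real.cos (((k:ℝ) - N) * θ) := by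
        intro k
        rw [← Complex.exp_conj, ← Complex.exp_add]
        have h : ((k:ℂ) * θ * Complex.I + (starRingEnd ℂ) ((N:ℂ) * θ * Complex.I))
            = (((k:ℝ) - N) * θ : ℝ) * Complex.I := by
          simp [map_mul, Complex.conj_I]
          push_cast
          ring
        rw [h, Complex.exp_ofReal_mul_I_re]
      have hcross : ((∑ k ∈ range N, Complex.exp (k * θ * Complex.I))
            * (starRingEnd ℂ) (Complex.exp (N * θ * Complex.I))).re
          = (∑ k ∈ range (N+1), Real.cos (k * θ)) - 1 := by
        rw [Finset.sum_mul, Complex.re_sum]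
        have h1 : ∀ k ∈ range N,
            (Complex.exp (k * θ * Complex.I) * (starRingEnd ℂ)
              (Complex.exp (N * θ * Complex.I))).re = Real.cos (((N:ℝ) - k) * θ) := by
          intro k _
          rw [hre k, ← Real.cos_neg]
          ring_nf
        rw [Finset.sum_congr rfl h1]
        have h2 : ∀ j ∈ range N, Real.cos (((N:ℝ) - (N - 1 - j : ℕ)) * θ)
            = Real.cos (((j:ℕ)+1 : ℝ) * θ) := by
          intro j hj
          simp only [Finset.mem_range] at hj
          congr 2
          have h3 : N - 1 - j = N - (1 + j) := by omega
          rw [h3, Nat.cast_sub (by omega)]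
          push_cast
          ring
        rw [← Finset.sum_range_reflect (fun k => Real.cos (((N:ℝ) - k) * θ)) N]
        rw [Finset.sum_congr rfl h2]
        rw [Finset.sum_range_succ' (fun k => Real.cos ((k:ℝ) * θ)) N]
        push_cast
        simp [Real.cos_zero]
      rw [Finset.sum_range_succ (fun i => ∑ k ∈ range (i+1), Real.cos (k * θ)) N,
        Finset.sum_range_succ (fun k => Complex.exp (k * θ * Complex.I)) N,
        Complex.normSq_add, hcross]
      have : Complex.normSq (Complex.exp (N * θ * Complex.I)) = 1 := by
        have h : (N : ℂ) * θ * Complex.I = ((N * θ : ℝ) : ℂ) * Complex.I := by push_cast; ring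
        rw [Complex.normSq_eq_norm_sq, h, Complex.norm_exp_ofReal_mul_I]
        norm_num
      rw [this]
      push_cast
      linarith [ih]

lemma fejer_pos (θ : ℝ) (N : ℕ) :
    (N : ℝ) ≤ 2 * ∑ i ∈ range N, ∑ k ∈ range (i+1), Real.cos (k * θ) := by
  rw [fejer_id]
  have := Complex.normSq_nonneg (∑ k ∈ range N, Complex.exp (k * θ * Complex.I))
  linarith

noncomputable def cc (m : ℕ) (θ : ℝ) (n : ℕ) : ℝ :=
  ∑ k ∈ Finset.range (n+1), ((n - k + m).choose m : ℝ) * Real.cos (k * θ)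

noncomputable def bb (m n : ℕ) (k : ℕ) : ℝ :=
  if k ≤ n then ((n - k + m).choose m : ℝ) else 0

lemma bb_d_nonneg (m n : ℕ) (hm : 1 ≤ m) (j : ℕ) :
    0 ≤ bb m n j - 2 * bb m n (j+1) + bb m n (j+2) := by
  unfold bb
  rcases lt_or_ge n j with h | h
  · rw [if_neg (by omega), if_neg (by omega), if_neg (by omega)]; norm_num
  rcases eq_or_lt_of_le h with rfl | h1
  · rw [if_pos le_rfl, if_neg (by omega), if_neg (by omega)]
    simp [Nat.choose_self]
  rcases eq_or_lt_of_le (by omega : j + 1 ≤ n) with h2 | h2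
  · -- j+1 = n
    rw [if_pos (by omega), if_pos (by omega), if_neg (by omega)]
    have e1 : n - j + m = m + 1 := by omega
    have e2 : n - (j+1) + m = m := by omega
    rw [e1, e2, Nat.choose_self, Nat.choose_succ_self_right]
    push_cast
    have : (1:ℝ) ≤ m := by exact_mod_cast hm
    linarith
  · -- j+2 ≤ n
    rw [if_pos (by omega), if_pos (by omega), if_pos (by omega)]
    obtain ⟨u, hu⟩ : ∃ u, n - (j+2) + m = u := ⟨_, rfl⟩
    have e1 : n - j + m = u + 2 := by omega
    have e2 : n - (j+1) + m = u + 1 := by omega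
    rw [e1, e2, hu]
    obtain ⟨mm, rfl⟩ : ∃ mm, m = mm + 1 := ⟨m - 1, by omega⟩
    have key : 2 * (u+1).choose (mm+1) ≤ (u+2).choose (mm+1) + u.choose (mm+1) := by
      rw [Nat.choose_succ_succ (u+1) mm, Nat.choose_succ_succ u mm]
      have := Nat.choose_le_choose mm (Nat.le_succ u)
      simp only [Nat.succ_eq_add_one] at *
      omega
    have := (Nat.cast_le (α := ℝ)).2 key
    push_cast at this ⊢
    linarith

lemma sum_d_weight (m n : ℕ) (N : ℕ) (hN : bb m n N = 0) (hN1 : bb m n (N+1) = 0) (h0 : 0 < N) :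
    ∑ j ∈ range N, (bb m n j - 2 * bb m n (j+1) + bb m n (j+2)) * ((j:ℝ) + 1) = bb m n 0 := by
  have h := abel2 (bb m n) (fun k => if k = 0 then (1:ℝ) else 0) N hN hN1
  have hS : ∀ i : ℕ, (∑ k ∈ range (i+1), if k = 0 then (1:ℝ) else 0) = 1 := by
    intro i
    rw [Finset.sum_ite_eq' (range (i+1)) 0 (fun _ => (1:ℝ))]
    simp
  have hG : ∀ j : ℕ, (∑ i ∈ range (j+1), ∑ k ∈ range (i+1), if k = 0 then (1:ℝ) else 0)
      = (j:ℝ) + 1 := by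
    intro j
    rw [Finset.sum_congr rfl (fun i _ => hS i)]
    simp
  simp only [hG] at h
  have hL : ∑ j ∈ range N, bb m n j * (fun k => if k = 0 then (1:ℝ) else 0) j = bb m n 0 := by
    rw [Finset.sum_eq_single 0]
    · simp
    · intro j _ hj; simp [hj]
    · intro h'; exact absurd (Finset.mem_range.2 h0) h'
  rw [hL] at h
  exact h.symm

lemma cc_ge (m : ℕ) (hm : 1 ≤ m) (θ : ℝ) (n : ℕ) (hn : 1 ≤ n) : (m:ℝ) ≤ cc m θ n := by
  rcases eq_or_lt_of_le hn with rfl | hn2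
  · simp [cc, Finset.sum_range_succ, Nat.choose_succ_self_right]
    have h1 : ((1+m).choose m : ℝ) = (m:ℝ)+1 := by
      rw [Nat.add_comm]
      exact_mod_cast Nat.choose_succ_self_right m
    rw [h1]
    nlinarith [Real.neg_one_le_cos θ]
  · have hb1 : bb m n (n+1) = 0 := by simp [bb]
    have hb2 : bb m n (n+1+1) = 0 := by simp [bb]
    have h := abel2 (bb m n) (fun k => Real.cos (k * θ)) (n+1) hb1 hb2
    have hL : ∑ j ∈ range (n+1), bb m n j * (fun k => Real.cos (k * θ)) j = cc m θ n := by
      apply Finset.sum_congr rfl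
      intro j hj
      simp only [Finset.mem_range] at hj
      simp only [bb, if_pos (by omega : j ≤ n)]
    rw [hL] at h
    have hlow : ∑ j ∈ range (n+1), (bb m n j - 2*bb m n (j+1) + bb m n (j+2)) * (((j:ℝ)+1)/2)
        ≤ cc m θ n := by
      rw [h]
      apply Finset.sum_le_sum
      intro j _
      apply mul_le_mul_of_nonneg_left _ (bb_d_nonneg m n hm j)
      have := fejer_pos θ (j+1)
      push_cast at this
      linarith
    have hsum : ∑ j ∈ range (n+1), (bb m n j - 2*bb m n (j+1) + bb m n (j+2)) * (((j:ℝ)+1)/2)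
        = bb m n 0 / 2 := by
      rw [← sum_d_weight m n (n+1) hb1 hb2 (by omega), Finset.sum_div]
      exact Finset.sum_congr rfl (fun j _ => by ring)
    rw [hsum] at hlow
    have hbb0 : bb m n 0 = ((n + m).choose m : ℝ) := by simp [bb]
    rw [hbb0] at hlow
    have hnat : 2 * m ≤ (n + m).choose m := by
      have h1 : (m+2).choose m ≤ (n+m).choose m := Nat.choose_le_choose m (by omega)
      have h2 : (m+2).choose m = (m+2).choose 2 := by
        have := Nat.choose_symm (by omega : m ≤ m + 2)
        simpa using this.symm
      have h3 : (m+2).choose 2 = (m+2)*(m+1)/2 := by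
        rw [Nat.choose_two_right]
        norm_num
      have h4 : 2*m ≤ (m+2)*(m+1)/2 := by
        rw [Nat.le_div_iff_mul_le (by norm_num)]
        nlinarith
      omega
    have : (2*m : ℝ) ≤ ((n+m).choose m : ℝ) := by exact_mod_cast hnat
    linarith


lemma hasSum_cheb (ω θ : ℝ) (hθ : Real.cos θ = ω) (hω' : ω ≤ 1) {x : ℝ} (hx0 : 0 ≤ x)
    (hx1 : x < 1) :
    HasSum (fun k : ℕ => Real.cos (k * θ) * x ^ k) ((1 - ω*x) / (1 - 2*ω*x + x^2)) := by
  have hq0 : 0 < 1 - 2*ω*x + x^2 := by nlinarith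
  have hts : Summable (fun k : ℕ => ‖Real.cos (k * θ) * x ^ k‖) := by
    apply Summable.of_nonneg_of_le (fun k => norm_nonneg _) (fun k => ?_)
      (summable_geometric_of_lt_one hx0 hx1)
    rw [norm_mul, Real.norm_eq_abs, Real.norm_eq_abs, abs_pow, abs_of_nonneg hx0]
    calc |Real.cos (k * θ)| * x ^ k ≤ 1 * x ^ k := by
          apply mul_le_mul_of_nonneg_right (Real.abs_cos_le_one _) (by positivity)
      _ = x ^ k := one_mul _
  have hA := hts.of_norm.hasSum
  set A := ∑' k : ℕ, Real.cos (k * θ) * x ^ k with hAdef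
  have h1 : HasSum (fun k : ℕ => Real.cos ((k+1 : ℕ) * θ) * x ^ (k+1))
      (A - ∑ i ∈ range 1, Real.cos (i * θ) * x ^ i) :=
    (hasSum_nat_add_iff' 1).2 hA
  have h2 : HasSum (fun k : ℕ => Real.cos ((k+2 : ℕ) * θ) * x ^ (k+2))
      (A - ∑ i ∈ range 2, Real.cos (i * θ) * x ^ i) :=
    (hasSum_nat_add_iff' 2).2 hA
  have h3 : HasSum (fun k : ℕ =>
      (2*ω*x) * (Real.cos ((k+1 : ℕ) * θ) * x ^ (k+1)) - x^2 * (Real.cos (k * θ) * x ^ k))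
      ((2*ω*x) * (A - ∑ i ∈ range 1, Real.cos (i * θ) * x ^ i) - x^2 * A) :=
    (h1.mul_left _).sub (hA.mul_left _)
  have hfun : ∀ k : ℕ, (2*ω*x) * (Real.cos ((k+1 : ℕ) * θ) * x ^ (k+1))
      - x^2 * (Real.cos (k * θ) * x ^ k) = Real.cos ((k+2 : ℕ) * θ) * x ^ (k+2) := by
    intro k
    have hrec : Real.cos ((k+2 : ℕ) * θ) + Real.cos (k * θ)
        = 2 * Real.cos ((k+1 : ℕ) * θ) * ω := by
      rw [← hθ, Real.cos_add_cos]
      push_cast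
      ring_nf
    have h4 : Real.cos ((k+2:ℕ) * θ) = 2 * ω * Real.cos ((k+1:ℕ)*θ) - Real.cos (k*θ) := by
      linarith
    rw [h4]
    ring
  have h5 : HasSum (fun k : ℕ => Real.cos ((k+2 : ℕ) * θ) * x ^ (k+2))
      ((2*ω*x) * (A - ∑ i ∈ range 1, Real.cos (i * θ) * x ^ i) - x^2 * A) :=
    h3.congr_fun (fun k => (hfun k).symm)
  have huniq := h2.unique h5
  have hs1 : ∑ i ∈ range 1, Real.cos (i * θ) * x ^ i = 1 := by
    simp
  have hs2 : ∑ i ∈ range 2, Real.cos (i * θ) * x ^ i = 1 + ω * x := by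
    rw [Finset.sum_range_succ, Finset.sum_range_one]
    push_cast
    norm_num [hθ]
    try ring
  rw [hs1, hs2] at huniq
  have hAval : A = (1 - ω*x) / (1 - 2*ω*x + x^2) := by
    rw [eq_div_iff hq0.ne']
    linarith [huniq]
  rwa [hAval] at hA


lemma hasSum_binom {x : ℝ} (hx0 : 0 ≤ x) (hx1 : x < 1) (k : ℕ) :
    HasSum (fun n : ℕ => ((n + k).choose k : ℝ) * x ^ n) (((1 - x) ^ (k+1))⁻¹) := by
  induction k with
  | zero =>
      simpa using hasSum_geometric_of_lt_one hx0 hx1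
  | succ k ih =>
      have hnorm : ∀ (f : ℕ → ℝ), (∀ n, 0 ≤ f n) → Summable f →
          Summable (fun n => ‖f n‖) := by
        intro f hf hsf
        refine hsf.congr (fun n => (Real.norm_of_nonneg (hf n)).symm)
      have hf : Summable (fun n : ℕ => ‖((n + k).choose k : ℝ) * x ^ n‖) :=
        hnorm _ (fun n => by positivity) ih.summable
      have hg : Summable (fun n : ℕ => ‖x ^ n‖) :=
        hnorm _ (fun n => by positivity) (summable_geometric_of_lt_one hx0 hx1)
      have hc := hasSum_sum_range_mul_of_summable_norm hf hg
      rw [ih.tsum_eq, (hasSum_geometric_of_lt_one hx0 hx1).tsum_eq] at hc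
      have hval : ((1-x) ^ (k+1))⁻¹ * (1-x)⁻¹ = ((1-x) ^ (k+2))⁻¹ := by
        rw [← mul_inv, ← pow_succ]
      rw [hval] at hc
      apply hc.congr_fun
      intro n
      have h1 : ∀ j ∈ range (n+1), ((j + k).choose k : ℝ) * x ^ j * x ^ (n - j)
          = ((j + k).choose k : ℝ) * x ^ n := by
        intro j hj
        simp only [Finset.mem_range] at hj
        rw [mul_assoc, ← pow_add]
        congr 2
        omega
      rw [Finset.sum_congr rfl h1, ← Finset.sum_mul]
      have h2 : ∑ j ∈ range (n+1), ((j + k).choose k : ℝ) = ((n + k + 1).choose (k+1) : ℝ) := by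
        rw [← Nat.cast_sum]
        exact_mod_cast congrArg (Nat.cast : ℕ → ℝ) (Nat.sum_range_add_choose n k)
      rw [h2]
      congr 2
      try omega

noncomputable def aa (m : ℕ) (θ : ℝ) (n : ℕ) : ℝ :=
  if n = 0 then 0 else cc m θ n - m

lemma hasSum_W (m : ℕ) (ω θ : ℝ) (hθ : Real.cos θ = ω) (hω' : ω ≤ 1) {x : ℝ}
    (hx0 : 0 ≤ x) (hx1 : x < 1) :
    HasSum (fun n : ℕ => aa m θ n * x ^ n)
      ((m : ℝ) - 1 - m / (1 - x)
        + (1 - ω * x) / ((1 - x) ^ (m + 1) * (1 - 2 * ω * x + x ^ 2))) := by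
  have hx1' : (0:ℝ) < 1 - x := by linarith
  have hq0 : 0 < 1 - 2*ω*x + x^2 := by nlinarith
  have hnorm : ∀ (f : ℕ → ℝ), (∀ n, 0 ≤ |f n|) → Summable f → Summable (fun n => ‖f n‖) := by
    intro f _ hsf
    exact hsf.abs
  have hB := hasSum_binom hx0 hx1 m
  have hS := hasSum_cheb ω θ hθ hω' hx0 hx1
  have hfn : Summable (fun n : ℕ => ‖((n + m).choose m : ℝ) * x ^ n‖) := by
    refine hB.summable.congr (fun n => ?_)
    exact (Real.norm_of_nonneg (by positivity)).symm
  have hgn : Summable (fun n : ℕ => ‖Real.cos (n * θ) * x ^ n‖) := by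
    apply Summable.of_nonneg_of_le (fun k => norm_nonneg _) (fun k => ?_)
      (summable_geometric_of_lt_one hx0 hx1)
    rw [norm_mul, Real.norm_eq_abs, Real.norm_eq_abs, abs_pow, abs_of_nonneg hx0]
    calc |Real.cos (k * θ)| * x ^ k ≤ 1 * x ^ k :=
          mul_le_mul_of_nonneg_right (Real.abs_cos_le_one _) (by positivity)
      _ = x ^ k := one_mul _
  have hc := hasSum_sum_range_mul_of_summable_norm hfn hgn
  rw [hB.tsum_eq, hS.tsum_eq] at hc
  -- identify the Cauchy product coefficients with cc
  have hcc : ∀ n : ℕ, ∑ j ∈ range (n+1),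
      (((j + m).choose m : ℝ) * x ^ j) * (Real.cos ((n - j : ℕ) * θ) * x ^ (n - j))
        = cc m θ n * x ^ n := by
    intro n
    have h1 : ∀ j ∈ range (n+1),
        (((j + m).choose m : ℝ) * x ^ j) * (Real.cos ((n - j : ℕ) * θ) * x ^ (n - j))
          = (((j + m).choose m : ℝ) * Real.cos ((n - j : ℕ) * θ)) * x ^ n := by
      intro j hj
      simp only [Finset.mem_range] at hj
      have : x ^ j * x ^ (n - j) = x ^ n := by rw [← pow_add]; congr 1; omega
      calc (((j + m).choose m : ℝ) * x ^ j) * (Real.cos ((n - j : ℕ) * θ) * x ^ (n - j))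
          = (((j + m).choose m : ℝ) * Real.cos ((n - j : ℕ) * θ)) * (x ^ j * x ^ (n-j)) := by
            ring
        _ = (((j + m).choose m : ℝ) * Real.cos ((n - j : ℕ) * θ)) * x ^ n := by rw [this]
    rw [Finset.sum_congr rfl h1, ← Finset.sum_mul]
    congr 1
    unfold cc
    rw [← Finset.sum_range_reflect
      (fun k => ((k + m).choose m : ℝ) * Real.cos ((n - k : ℕ) * θ)) (n+1)]
    apply Finset.sum_congr rfl
    intro j hj
    simp only [Finset.mem_range] at hj
    have e1 : n + 1 - 1 - j = n - j := by omega
    have e2 : n - (n - j) = j := by omega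
    rw [e1, e2]
  have hC : HasSum (fun n : ℕ => cc m θ n * x ^ n)
      (((1 - x) ^ (m+1))⁻¹ * ((1 - ω*x) / (1 - 2*ω*x + x^2))) :=
    hc.congr_fun (fun n => (hcc n).symm)
  have hM : HasSum (fun n : ℕ => (m:ℝ) * x ^ n) ((m:ℝ) * (1-x)⁻¹) :=
    (hasSum_geometric_of_lt_one hx0 hx1).mul_left _
  have hI : HasSum (fun n : ℕ => if n = 0 then (m:ℝ) - 1 else 0) ((m:ℝ) - 1) :=
    hasSum_ite_eq 0 _
  have htot := (hC.sub hM).add hI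
  have hfun : ∀ n : ℕ, (cc m θ n * x ^ n - (m:ℝ) * x ^ n) + (if n = 0 then (m:ℝ) - 1 else 0)
      = aa m θ n * x ^ n := by
    intro n
    cases n with
    | zero =>
        simp [aa, cc]
    | succ n =>
        simp only [aa, Nat.succ_ne_zero, if_neg, if_false]
        ring
  have htot2 := htot.congr_fun (fun n => (hfun n).symm)
  have hval : ((1 - x) ^ (m+1))⁻¹ * ((1 - ω*x) / (1 - 2*ω*x + x^2)) - (m:ℝ) * (1-x)⁻¹
      + ((m:ℝ) - 1)
      = (m : ℝ) - 1 - m / (1 - x)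
        + (1 - ω * x) / ((1 - x) ^ (m + 1) * (1 - 2 * ω * x + x ^ 2)) := by
    rw [div_eq_mul_inv, div_eq_mul_inv, div_eq_mul_inv, mul_inv]
    ring
  rwa [hval] at htot2


theorem stmt_12 (m : ℕ) (hm : 1 ≤ m) (ω : ℝ) (hω : -1 ≤ ω) (hω' : ω ≤ 1)
    (W : ℝ → ℝ) (hW0 : W 0 = 0)
    (hW : ∀ x : ℝ, 0 < x → x < 1 → W x = (m : ℝ) - 1 - m / (1 - x)
        + (1 - ω * x) / ((1 - x) ^ (m + 1) * (1 - 2 * ω * x + x ^ 2))) :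
    ∀ x y : ℝ, 0 ≤ x → 0 ≤ y → x + y < 1 → W x + W y ≤ W (x + y) := by
  intro x y hx hy hxy
  rcases eq_or_lt_of_le hx with rfl | hx0
  · rw [hW0, zero_add, zero_add]
  rcases eq_or_lt_of_le hy with rfl | hy0
  · rw [hW0, add_zero, add_zero]
  set θ := Real.arccos ω with hθdef
  have hθ : Real.cos θ = ω := Real.cos_arccos hω hω'
  have hx1 : x < 1 := by linarith
  have hy1 : y < 1 := by linarith
  have hX := hasSum_W m ω θ hθ hω' (le_of_lt hx0) hx1
  have hY := hasSum_W m ω θ hθ hω' (le_of_lt hy0) hy1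
  have hXY := hasSum_W m ω θ hθ hω' (by linarith : (0:ℝ) ≤ x + y) hxy
  rw [← hW x hx0 hx1] at hX
  rw [← hW y hy0 hy1] at hY
  rw [← hW (x+y) (by linarith) hxy] at hXY
  apply hasSum_le _ (hX.add hY) hXY
  intro n
  cases n with
  | zero => simp [aa]
  | succ k =>
      have ha : 0 ≤ aa m θ (k+1) := by
        have := cc_ge m hm θ (k+1) (by omega)
        simp only [aa, Nat.succ_ne_zero, if_false]
        linarith
      have hpow : x ^ (k+1) + y ^ (k+1) ≤ (x + y) ^ (k+1) :=
        pow_add_pow_le (le_of_lt hx0) (le_of_lt hy0) (Nat.succ_ne_zero k)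
      calc aa m θ (k+1) * x ^ (k+1) + aa m θ (k+1) * y ^ (k+1)
          = aa m θ (k+1) * (x ^ (k+1) + y ^ (k+1)) := by ring
        _ ≤ aa m θ (k+1) * (x + y) ^ (k+1) := mul_le_mul_of_nonneg_left hpow ha
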